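/- Suppose H is a k-graph on n vertices, n divisible by k, with vertex partition V = (A ∪ B) ∪ C where |A ∪ B| = n/k, C is an independent set, and δ_{k−1}(H) ≥ n/k. Then H contains a perfect matching. -/

import Mathlib

/-- Auxiliary: greedily build a matching covering `D ∪ W` where each edge uses
one vertex of `W` and `k-1` vertices of `D`. -/
lemma aux_matching {V : Type*} [DecidableEq V] (k : ℕ) (H : Finset (Finset V)) :
    ∀ (m : ℕ) (D W : Finset V), Disjoint D W → D.card = (k - 1) * m → W.card = m →
      (∀ v ∈ W, ∀ T ⊆ D, T.card = k - 1 → insert v T ∈ H) →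
      ∃ M : Finset (Finset V), M ⊆ H ∧
        (M : Set (Finset V)).Pairwise (fun e f => Disjoint e f) ∧
        M.biUnion id = D ∪ W := by
  intro m
  induction m with
  | zero =>
    intro D W _ hD hW _
    refine ⟨∅, by simp, by simp, ?_⟩
    have hD0 : D = ∅ := Finset.card_eq_zero.mp (by simpa using hD)
    have hW0 : W = ∅ := Finset.card_eq_zero.mp hW
    simp [hD0, hW0]
  | succ m ih =>
    intro D W hdisj hD hW hedge
    obtain ⟨v, hv⟩ : W.Nonempty := Finset.card_pos.mp (by omega)
    obtain ⟨T, hTD, hT⟩ : ∃ T ⊆ D, T.card = k - 1 :=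
      Finset.exists_subset_card_eq (by nlinarith [hD])
    have heH : insert v T ∈ H := hedge v hv T hTD hT
    have hvD : v ∉ D := fun h => (Finset.disjoint_left.mp hdisj h) hv
    have hvT : v ∉ T := fun h => hvD (hTD h)
    obtain ⟨M', hM'H, hM'pw, hM'un⟩ :=
      ih (D \ T) (W.erase v)
        (hdisj.mono Finset.sdiff_subset (Finset.erase_subset _ _))
        (by rw [Finset.card_sdiff_of_subset hTD, hD, hT, Nat.mul_succ]; omega)
        (by rw [Finset.card_erase_of_mem hv, hW]; omega)
        (fun v' hv' T' hT' hcT' =>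
          hedge v' (Finset.mem_of_mem_erase hv') T' (hT'.trans Finset.sdiff_subset) hcT')
    refine ⟨insert (insert v T) M', ?_, ?_, ?_⟩
    · exact Finset.insert_subset heH hM'H
    · rw [Finset.coe_insert]
      haveI : Std.Symm (fun e f : Finset V => Disjoint e f) := ⟨fun a b h => h.symm⟩; refine Set.pairwise_insert_of_symmetric |>.mpr ⟨hM'pw, ?_⟩
      intro f hf _
      have hfsub : f ⊆ (D \ T) ∪ (W.erase v) := by
        rw [← hM'un]; exact Finset.subset_biUnion_of_mem id hf
      refine Finset.disjoint_left.mpr fun a ha haf => ?_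
      have ha' := hfsub haf
      rcases Finset.mem_insert.mp ha with rfl | haT
      · rcases Finset.mem_union.mp ha' with h | h
        · exact hvD (Finset.mem_sdiff.mp h).1
        · exact (Finset.mem_erase.mp h).1 rfl
      · rcases Finset.mem_union.mp ha' with h | h
        · exact (Finset.mem_sdiff.mp h).2 haT
        · exact Finset.disjoint_left.mp hdisj (hTD haT) (Finset.mem_of_mem_erase h)
    · rw [Finset.biUnion_insert, hM'un]
      ext a
      simp only [id_eq, Finset.mem_union, Finset.mem_insert, Finset.mem_sdiff,
        Finset.mem_erase]
      constructor
      · rintro (⟨rfl | h⟩ | ⟨h, _⟩ | ⟨_, h⟩)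
        · exact Or.inr hv
        · exact Or.inl (hTD h)
        · exact Or.inl h
        · exact Or.inr h
      · rintro (h | h)
        · by_cases hT' : a ∈ T
          · exact Or.inl (Or.inr hT')
          · exact Or.inr (Or.inl ⟨h, hT'⟩)
        · by_cases hv' : a = v
          · exact Or.inl (Or.inl hv')
          · exact Or.inr (Or.inr ⟨hv', h⟩)

/-- The `i = 0` case of Lemma 4.3: if `C` is independent, `|V \ C| = n/k` and
`δ_{k-1}(H) ≥ n/k`, then `H` has a perfect matching. -/
theorem stmt_13 {V : Type*} [Fintype V] [DecidableEq V] (k n : ℕ) (hk : 0 < k) (hkn : k ∣ n)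
    (hn : Fintype.card V = n)
    (H : Finset (Finset V)) (hH : ∀ e ∈ H, e.card = k)
    (C : Finset V) (hCind : ∀ e ∈ H, ¬ e ⊆ C)
    (hAB : Cᶜ.card = n / k)
    (hdeg : ∀ S : Finset V, S.card = k - 1 → n / k ≤ (H.filter (fun e => S ⊆ e)).card) :
    ∃ M : Finset (Finset V), M ⊆ H ∧
      (M : Set (Finset V)).Pairwise (fun e f => Disjoint e f) ∧
      M.biUnion id = Finset.univ := by
  obtain ⟨m, rfl⟩ := hkn
  have hm : k * m / k = m := Nat.mul_div_cancel_left m hk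
  rw [hm] at hAB hdeg
  have hCcard : C.card = (k - 1) * m := by
    have := Finset.card_add_card_compl C
    rw [hn, hAB] at this
    have hk1 : k = (k - 1) + 1 := by omega
    nlinarith [this]
  -- key fact: any (k-1)-subset of C together with any vertex of Cᶜ is an edge
  have key : ∀ v ∈ Cᶜ, ∀ T ⊆ C, T.card = k - 1 → insert v T ∈ H := by
    intro v hv T hTC hT
    set F := H.filter (fun e => T ⊆ e) with hF
    have hinj : Set.InjOn (· \ T) F := by
      intro e he f hf hef
      have he' := Finset.mem_filter.mp he
      have hf' := Finset.mem_filter.mp hf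
      have h1 : T ∪ (e \ T) = e := Finset.union_sdiff_of_subset he'.2
      have h2 : T ∪ (f \ T) = f := Finset.union_sdiff_of_subset hf'.2
      rw [← h1, ← h2]; exact congrArg (T ∪ ·) hef
    have hsub : F.image (· \ T) ⊆ Cᶜ.image ({·}) := by
      intro s hs
      obtain ⟨e, he, rfl⟩ := Finset.mem_image.mp hs
      have he' := Finset.mem_filter.mp he
      have hcard : (e \ T).card = 1 := by
        rw [Finset.card_sdiff_of_subset he'.2, hH e he'.1, hT]; omega
      obtain ⟨u, hu⟩ := Finset.card_eq_one.mp hcard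
      have huC : u ∈ Cᶜ := by
        rw [Finset.mem_compl]
        intro huC
        apply hCind e he'.1
        intro a ha
        by_cases haT : a ∈ T
        · exact hTC haT
        · have : a ∈ e \ T := Finset.mem_sdiff.mpr ⟨ha, haT⟩
          rw [hu, Finset.mem_singleton] at this
          exact this ▸ huC
      rw [hu]
      exact Finset.mem_image_of_mem _ huC
    have hcard1 : (Cᶜ.image ({·} : V → Finset V)).card = m := by
      rw [Finset.card_image_of_injective _ (fun a b h => by
        simpa using h), hAB]
    have hcard2 : m ≤ (F.image (· \ T)).card := by
      rw [Finset.card_image_of_injOn hinj]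
      exact hdeg T hT
    have heq : F.image (· \ T) = Cᶜ.image ({·}) :=
      Finset.eq_of_subset_of_card_le hsub (by omega)
    have hvmem : ({v} : Finset V) ∈ F.image (· \ T) := by
      rw [heq]; exact Finset.mem_image_of_mem _ hv
    obtain ⟨e, he, hev⟩ := Finset.mem_image.mp hvmem
    have he' := Finset.mem_filter.mp he
    have : e = insert v T := by
      rw [Finset.insert_eq, ← hev, Finset.union_comm]
      exact (Finset.union_sdiff_of_subset he'.2).symm
    exact this ▸ he'.1
  obtain ⟨M, hMH, hMpw, hMun⟩ :=
    aux_matching k H m C Cᶜ disjoint_compl_right hCcard hAB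
      (fun v hv T hT hcT => key v hv T hT hcT)
  exact ⟨M, hMH, hMpw, by rw [hMun, Finset.union_compl]⟩
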